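/- arXiv:0909.1178 — 6 statements merged into one kernel-verified Lean document; each statement's English description precedes it below -/
import Mathlib

section
/- Let q be a prime power. The number δ(2,q;0) of pairs (α₁,α₂) ∈ (F_q*)² with α₁ + α₂ + α₁⁻¹ + α₂⁻¹ = 0 equals 2q - 4 if the characteristic of F_q is odd, and equals 2q - 3 if the characteristic is 2. -/
open Finset in
theorem stmt1 {F : Type*} [Field F] [Fintype F] :
    (ringChar F ≠ 2 →
      Nat.card {p : F × F // p.1 ≠ 0 ∧ p.2 ≠ 0 ∧ p.1 + p.2 + p.1⁻¹ + p.2⁻¹ = 0}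
        = 2 * Fintype.card F - 4) ∧
    (ringChar F = 2 →
      Nat.card {p : F × F // p.1 ≠ 0 ∧ p.2 ≠ 0 ∧ p.1 + p.2 + p.1⁻¹ + p.2⁻¹ = 0}
        = 2 * Fintype.card F - 3) := by
  classical
  have key : ∀ a b : F, a ≠ 0 → b ≠ 0 →
      (a + b + a⁻¹ + b⁻¹ = 0 ↔ b = -a ∨ b = -a⁻¹) := by
    intro a b ha hb
    have h1 : (a + b + a⁻¹ + b⁻¹) * (a * b) = (a + b) * (a * b + 1) := by
      field_simp; ring
    constructor
    · intro h
      have h2 : (a + b) * (a * b + 1) = 0 := by rw [← h1, h, zero_mul]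
      rcases mul_eq_zero.1 h2 with h3 | h3
      · left; linear_combination h3
      · right
        field_simp
        linear_combination h3
    · rintro (rfl | rfl)
      · rw [inv_neg]; ring
      · rw [inv_neg, inv_inv]; ring
  set N : Finset F := Finset.univ.erase 0 with hN
  set T1 : Finset (F × F) := N.image (fun a => (a, -a)) with hT1
  set T2 : Finset (F × F) := N.image (fun a => (a, -a⁻¹)) with hT2
  set S : Finset (F × F) := Finset.univ.filter
    (fun p => p.1 ≠ 0 ∧ p.2 ≠ 0 ∧ p.1 + p.2 + p.1⁻¹ + p.2⁻¹ = 0) with hS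
  have hcard : Nat.card {p : F × F // p.1 ≠ 0 ∧ p.2 ≠ 0 ∧ p.1 + p.2 + p.1⁻¹ + p.2⁻¹ = 0}
      = S.card := by
    rw [Nat.card_eq_fintype_card, hS]
    convert Fintype.card_subtype _
  have hSU : S = T1 ∪ T2 := by
    ext ⟨x, y⟩
    simp only [hS, hT1, hT2, hN, mem_filter, mem_union, mem_image, mem_erase, mem_univ,
      and_true, true_and, Prod.ext_iff]
    constructor
    · rintro ⟨hx, hy, h⟩
      rcases (key x y hx hy).1 h with h' | h'
      · exact Or.inl ⟨x, hx, rfl, h'.symm⟩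
      · exact Or.inr ⟨x, hx, rfl, h'.symm⟩
    · rintro (⟨a, ha, rfl, rfl⟩ | ⟨a, ha, rfl, rfl⟩)
      · exact ⟨ha, neg_ne_zero.2 ha, (key a (-a) ha (neg_ne_zero.2 ha)).2 (Or.inl rfl)⟩
      · exact ⟨ha, neg_ne_zero.2 (inv_ne_zero ha),
          (key a (-a⁻¹) ha (neg_ne_zero.2 (inv_ne_zero ha))).2 (Or.inr rfl)⟩
  have hNcard : N.card = Fintype.card F - 1 := by
    rw [hN, Finset.card_erase_of_mem (mem_univ 0), Finset.card_univ]
  have hT1card : T1.card = Fintype.card F - 1 := by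
    rw [hT1, Finset.card_image_of_injective _ (fun a b h => (Prod.ext_iff.1 h).1), hNcard]
  have hT2card : T2.card = Fintype.card F - 1 := by
    rw [hT2, Finset.card_image_of_injective _ (fun a b h => (Prod.ext_iff.1 h).1), hNcard]
  have hUI : (T1 ∪ T2).card + (T1 ∩ T2).card = T1.card + T2.card :=
    Finset.card_union_add_card_inter T1 T2
  have hq : 2 ≤ Fintype.card F := Fintype.one_lt_card
  constructor
  · intro hchar
    have h2 : (2 : F) ≠ 0 := Ring.two_ne_zero hchar
    have hne : (1 : F) ≠ -1 := by
      intro h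
      apply h2
      linear_combination h
    have hI : T1 ∩ T2 = {((1 : F), (-1 : F)), ((-1 : F), (1 : F))} := by
      ext ⟨x, y⟩
      simp only [hT1, hT2, hN, mem_inter, mem_image, mem_erase, mem_univ, and_true,
        Prod.ext_iff, mem_insert, mem_singleton]
      constructor
      · rintro ⟨⟨a, ha, rfl, rfl⟩, ⟨b, hb, rfl, h⟩⟩
        have hsq : (b - 1) * (b + 1) = 0 := by
          have hbb : b⁻¹ = b := neg_injective h
          field_simp at hbb
          linear_combination -hbb
        rcases mul_eq_zero.1 hsq with h' | h'
        · left
          constructor <;> [skip; rw [show b = 1 by linear_combination h']]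
          · linear_combination h'
        · right
          have hb1 : b = -1 := by linear_combination h'
          subst hb1
          exact ⟨rfl, by rw [neg_neg]⟩
      · rintro (⟨rfl, rfl⟩ | ⟨rfl, rfl⟩)
        · exact ⟨⟨1, one_ne_zero, rfl, rfl⟩, ⟨1, one_ne_zero, rfl, by rw [inv_one]⟩⟩
        · refine ⟨⟨-1, neg_ne_zero.2 one_ne_zero, rfl, by rw [neg_neg]⟩,
            ⟨-1, neg_ne_zero.2 one_ne_zero, rfl, ?_⟩⟩
          rw [inv_neg, inv_one, neg_neg]
    have hIcard : (T1 ∩ T2).card = 2 := by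
      rw [hI]
      rw [Finset.card_insert_of_notMem, Finset.card_singleton]
      simp only [mem_singleton, Prod.ext_iff, not_and]
      intro h
      exact absurd h hne
    rw [hcard, hSU]
    omega
  · intro hchar
    haveI : CharP F 2 := by rw [← hchar]; exact ringChar.charP F
    have h2z : (2 : F) = 0 := by
      have := CharP.cast_eq_zero F 2
      simpa using this
    have hI : T1 ∩ T2 = {((1 : F), (-1 : F))} := by
      ext ⟨x, y⟩
      simp only [hT1, hT2, hN, mem_inter, mem_image, mem_erase, mem_univ, and_true,
        Prod.ext_iff, mem_singleton]
      constructor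
      · rintro ⟨⟨a, ha, rfl, rfl⟩, ⟨b, hb, rfl, h⟩⟩
        have hbb : b = b⁻¹ := (neg_injective h).symm
        have hsq : b * b = 1 := by field_simp at hbb; linear_combination hbb
        have hb1 : b = 1 := by
          have : (b - 1) * (b - 1) = 0 := by linear_combination hsq + (1 - b) * h2z
          have := mul_self_eq_zero.1 this
          linear_combination this
        subst hb1
        exact ⟨rfl, rfl⟩
      · rintro ⟨rfl, rfl⟩
        exact ⟨⟨1, one_ne_zero, rfl, rfl⟩, ⟨1, one_ne_zero, rfl, by rw [inv_one]⟩⟩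
    have hIcard : (T1 ∩ T2).card = 1 := by rw [hI, Finset.card_singleton]
    rw [hcard, hSU]
    omega
end

section
/- Let q be a prime power, λ the canonical additive character of F_q, and β ∈ F_q. Then δ(2,q;β) ≤ δ(2,q;0), where δ(2,q;β) = |{(α₁,α₂) ∈ (F_q*)² : α₁ + α₂ + α₁⁻¹ + α₂⁻¹ = β}|. Consequently δ(2,q;β) ≤ 2q - 4 if char F_q is odd and δ(2,q;β) ≤ 2q - 3 if char F_q = 2. -/
open Finset Polynomial

section Aux

variable {F : Type*} [Field F] [Fintype F] [DecidableEq F]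

private def Aset (c : F) : Finset F := univ.filter (fun a => a ≠ 0 ∧ a + a⁻¹ = c)

private lemma mem_Aset {c a : F} : a ∈ Aset c ↔ a ≠ 0 ∧ a + a⁻¹ = c := by
  simp [Aset]

private lemma card_Aset_le_two (c : F) : (Aset c).card ≤ 2 := by
  have hdeg : (X ^ 2 - C c * X + 1 : F[X]).natDegree = 2 := by
    compute_degree!
  have hne : (X ^ 2 - C c * X + 1 : F[X]) ≠ 0 := by
    intro h
    rw [h] at hdeg
    simp at hdeg
  have hsub : Aset c ⊆ (X ^ 2 - C c * X + 1 : F[X]).roots.toFinset := by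
    intro a ha
    rw [mem_Aset] at ha
    rw [Multiset.mem_toFinset, mem_roots hne]
    have hinv := mul_inv_cancel₀ ha.1
    simp only [IsRoot, eval_add, eval_sub, eval_pow, eval_mul, eval_C, eval_X, eval_one]
    linear_combination a * ha.2 - hinv
  calc (Aset c).card ≤ _ := Finset.card_le_card hsub
    _ ≤ Multiset.card (X ^ 2 - C c * X + 1 : F[X]).roots := Multiset.toFinset_card_le _
    _ ≤ 2 := by
        have := Polynomial.card_roots' (X ^ 2 - C c * X + 1 : F[X])
        omega

private lemma sum_card_Aset : ∑ c : F, (Aset c).card = Fintype.card F - 1 := by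
  have key := Finset.card_eq_sum_card_fiberwise
    (s := univ.filter (fun a : F => a ≠ 0)) (t := univ)
    (f := fun a => a + a⁻¹) (fun _ _ => mem_univ _)
  have h1 : (univ.filter (fun a : F => a ≠ 0)).card = Fintype.card F - 1 := by
    rw [Finset.filter_ne', Finset.card_erase_of_mem (mem_univ _), card_univ]
  have h2 : ∀ c : F,
      ((univ.filter (fun a : F => a ≠ 0)).filter (fun a => a + a⁻¹ = c)) = Aset c := by
    intro c
    ext a
    simp [Aset, and_assoc]
  rw [h1] at key
  rw [key]
  exact Finset.sum_congr rfl fun c _ => by rw [h2 c]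

private def Sset (β : F) : Finset (F × F) :=
  univ.filter (fun p => p.1 ≠ 0 ∧ p.2 ≠ 0 ∧ p.1 + p.2 + p.1⁻¹ + p.2⁻¹ = β)

private lemma card_Sset (β : F) :
    (Sset β).card = ∑ c : F, (Aset c).card * (Aset (β - c)).card := by
  rw [Finset.card_eq_sum_card_fiberwise
    (f := fun p : F × F => p.1 + p.1⁻¹) (t := univ) (fun _ _ => mem_univ _)]
  refine Finset.sum_congr rfl fun c _ => ?_
  rw [← Finset.card_product]
  congr 1
  ext p
  simp only [Sset, mem_filter, mem_univ, true_and, Finset.mem_product, mem_Aset]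
  constructor
  · rintro ⟨⟨h1, h2, h3⟩, h4⟩
    exact ⟨⟨h1, h4⟩, h2, by linear_combination h3 - h4⟩
  · rintro ⟨⟨h1, h4⟩, h2, h5⟩
    exact ⟨⟨h1, h2, by linear_combination h4 + h5⟩, h4⟩

private lemma card_Aset_neg (c : F) : (Aset (-c)).card = (Aset c).card := by
  have : Aset (-c) = (Aset c).image (fun a => -a) := by
    ext a
    simp only [Finset.mem_image, mem_Aset]
    constructor
    · rintro ⟨h1, h2⟩
      refine ⟨-a, ⟨neg_ne_zero.mpr h1, ?_⟩, neg_neg a⟩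
      rw [inv_neg]; linear_combination -h2
    · rintro ⟨b, ⟨h1, h2⟩, rfl⟩
      refine ⟨neg_ne_zero.mpr h1, ?_⟩
      rw [inv_neg]; linear_combination -h2
  rw [this, Finset.card_image_of_injective _ neg_injective]

private lemma card_Sset_zero :
    (Sset (0 : F)).card = ∑ c : F, (Aset c).card ^ 2 := by
  rw [card_Sset]
  refine Finset.sum_congr rfl fun c _ => ?_
  rw [zero_sub, card_Aset_neg, sq]

private lemma card_Sset_le (β : F) :
    (Sset β).card ≤ ∑ c : F, (Aset c).card ^ 2 := by
  rw [card_Sset]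
  have hre : ∑ c : F, (Aset (β - c)).card ^ 2 = ∑ c : F, (Aset c).card ^ 2 :=
    Fintype.sum_equiv (Equiv.subLeft β) _ _ (fun c => rfl)
  have cs := Finset.sum_mul_sq_le_sq_mul_sq univ
    (fun c : F => (Aset c).card) (fun c : F => (Aset (β - c)).card)
  rw [hre, ← sq] at cs
  exact (Nat.pow_le_pow_iff_left two_ne_zero).mp cs

private lemma sum_sq_bound (T : Finset F) (hT : ∀ c ∈ T, (Aset c).card = 1) :
    (∑ c : F, (Aset c).card ^ 2) + T.card ≤ 2 * (Fintype.card F - 1) := by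
  have key : ∀ c : F, (Aset c).card ^ 2 + (if (Aset c).card = 1 then 1 else 0)
      ≤ 2 * (Aset c).card := by
    intro c
    have := card_Aset_le_two c
    interval_cases h : (Aset c).card <;> simp
  have h3 : (∑ c : F, (Aset c).card ^ 2) + (∑ c : F, (if (Aset c).card = 1 then 1 else 0))
      ≤ 2 * (Fintype.card F - 1) := by
    rw [← Finset.sum_add_distrib, ← sum_card_Aset, Finset.mul_sum]
    exact Finset.sum_le_sum fun c _ => key c
  have h4 : T.card ≤ ∑ c : F, (if (Aset c).card = 1 then 1 else 0) := by
    rw [← Finset.card_filter]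
    exact Finset.card_le_card (fun c hc => Finset.mem_filter.mpr ⟨mem_univ _, hT c hc⟩)
  omega

private lemma Aset_two (h2 : (2 : F) ≠ 0) : Aset (2 : F) = {1} := by
  ext a
  rw [mem_Aset, Finset.mem_singleton]
  constructor
  · rintro ⟨h1, hh⟩
    have hinv := mul_inv_cancel₀ h1
    have : (a - 1) ^ 2 = 0 := by linear_combination a * hh - hinv
    have := pow_eq_zero_iff (n := 2) (by norm_num) |>.mp this
    exact sub_eq_zero.mp this
  · rintro rfl
    refine ⟨one_ne_zero, by norm_num⟩

private lemma Aset_neg_two (h2 : (2 : F) ≠ 0) : Aset (-2 : F) = {-1} := by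
  have := Aset_two h2
  have hneg : Aset (-2 : F) = (Aset (2:F)).image (fun a => -a) := by
    have h := card_Aset_neg (2 : F)
    ext a
    simp only [Finset.mem_image, mem_Aset]
    constructor
    · rintro ⟨h1, hh⟩
      refine ⟨-a, ⟨neg_ne_zero.mpr h1, ?_⟩, neg_neg a⟩
      rw [inv_neg]; linear_combination -hh
    · rintro ⟨b, ⟨h1, hh⟩, rfl⟩
      refine ⟨neg_ne_zero.mpr h1, ?_⟩
      rw [inv_neg]; linear_combination -hh
  rw [hneg, this]
  rfl

private lemma Aset_zero_char_two (h2 : (2 : F) = 0) : Aset (0 : F) = {1} := by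
  ext a
  rw [mem_Aset, Finset.mem_singleton]
  constructor
  · rintro ⟨h1, hh⟩
    have hinv := mul_inv_cancel₀ h1
    have : (a - 1) ^ 2 = 0 := by linear_combination a * hh - hinv - a * h2
    have := pow_eq_zero_iff (n := 2) (by norm_num) |>.mp this
    exact sub_eq_zero.mp this
  · rintro rfl
    refine ⟨one_ne_zero, by rw [inv_one]; linear_combination h2⟩

end Aux

theorem stmt3 {F : Type*} [Field F] [Fintype F] (β : F) :
    Nat.card {p : F × F // p.1 ≠ 0 ∧ p.2 ≠ 0 ∧ p.1 + p.2 + p.1⁻¹ + p.2⁻¹ = β}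
      ≤ Nat.card {p : F × F // p.1 ≠ 0 ∧ p.2 ≠ 0 ∧ p.1 + p.2 + p.1⁻¹ + p.2⁻¹ = 0} ∧
    (ringChar F ≠ 2 →
      Nat.card {p : F × F // p.1 ≠ 0 ∧ p.2 ≠ 0 ∧ p.1 + p.2 + p.1⁻¹ + p.2⁻¹ = β}
        ≤ 2 * Fintype.card F - 4) ∧
    (ringChar F = 2 →
      Nat.card {p : F × F // p.1 ≠ 0 ∧ p.2 ≠ 0 ∧ p.1 + p.2 + p.1⁻¹ + p.2⁻¹ = β}
        ≤ 2 * Fintype.card F - 3) := by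
  classical
  have hcard : ∀ γ : F,
      Nat.card {p : F × F // p.1 ≠ 0 ∧ p.2 ≠ 0 ∧ p.1 + p.2 + p.1⁻¹ + p.2⁻¹ = γ}
        = (Sset γ).card := by
    intro γ
    rw [Nat.card_eq_fintype_card, Fintype.card_subtype]
    rfl
  have hq : 2 ≤ Fintype.card F := Fintype.one_lt_card
  have hle := card_Sset_le β
  refine ⟨?_, ?_, ?_⟩
  · rw [hcard, hcard, card_Sset_zero]
    exact hle
  · intro hchar
    have h2 : (2 : F) ≠ 0 := Ring.two_ne_zero hchar
    have hT : ∀ c ∈ ({2, -2} : Finset F), (Aset c).card = 1 := by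
      intro c hc
      rcases Finset.mem_insert.mp hc with rfl | hc
      · rw [Aset_two h2]; rfl
      · rw [Finset.mem_singleton.mp hc, Aset_neg_two h2]; rfl
    have hcard2 : ({2, -2} : Finset F).card = 2 := by
      rw [Finset.card_insert_of_notMem, Finset.card_singleton]
      rw [Finset.mem_singleton]
      intro h
      apply h2
      have : (2 : F) + 2 = 0 := by linear_combination h
      have h4 : (2 : F) * 2 = 0 := by linear_combination this
      rcases mul_eq_zero.mp h4 with h | h <;> exact h
    have := sum_sq_bound ({2, -2} : Finset F) hT
    rw [hcard2] at this
    rw [hcard]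
    omega
  · intro hchar
    have h2 : (2 : F) = 0 := by
      have : ((2 : ℕ) : F) = 0 := by
        rw [← hchar]; exact CharP.cast_eq_zero F (ringChar F)
      exact_mod_cast this
    have hT : ∀ c ∈ ({0} : Finset F), (Aset c).card = 1 := by
      intro c hc
      rw [Finset.mem_singleton.mp hc, Aset_zero_char_two h2]; rfl
    have := sum_sq_bound ({0} : Finset F) hT
    rw [Finset.card_singleton] at this
    rw [hcard]
    omega
end

section
/- Let q be a prime power, λ the canonical additive character of F_q, m ≥ 0 an integer, and β ∈ F_q. Then Σ_{a ∈ F_q*} λ(-aβ) K(λ;a²)^m = q·δ(m,q;β) - (q-1)^m. -/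
open Finset

private lemma addchar_map_sum {F : Type*} [Field F] (ψ : AddChar F ℂ) {ι : Type*}
    (s : Finset ι) (f : ι → F) : ψ (∑ i ∈ s, f i) = ∏ i ∈ s, ψ (f i) := by
  induction s using Finset.cons_induction with
  | empty => simp [ψ.map_zero_eq_one]
  | cons a s ha ih => rw [Finset.sum_cons, Finset.prod_cons, ψ.map_add_eq_mul, ih]

theorem stmt5 {F : Type*} [Field F] [Fintype F] [DecidableEq F]
    (ψ : AddChar F ℂ) (hψ : ψ ≠ 1) (m : ℕ) (β : F) :
    ∑ a ∈ Finset.univ.filter (fun a : F => a ≠ 0),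
        ψ (-(a * β)) * (∑ α ∈ Finset.univ.filter (fun α : F => α ≠ 0), ψ (α + a ^ 2 * α⁻¹)) ^ m
      = (Fintype.card F : ℂ) *
          (Nat.card {v : Fin m → F // (∀ i, v i ≠ 0) ∧ ∑ i, (v i + (v i)⁻¹) = β} : ℂ)
        - ((Fintype.card F : ℂ) - 1) ^ m := by
  classical
  set S : Finset F := Finset.univ.filter (fun a : F => a ≠ 0) with hS
  -- substitution in Kloosterman sum
  have key1 : ∀ a ∈ S, (∑ α ∈ S, ψ (α + a ^ 2 * α⁻¹)) = ∑ γ ∈ S, ψ (a * (γ + γ⁻¹)) := by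
    intro a haS
    have ha : a ≠ 0 := by simpa [hS] using haS
    refine Finset.sum_nbij' (fun α => a⁻¹ * α) (fun γ => a * γ) ?_ ?_ ?_ ?_ ?_
    · intro α hα
      have : α ≠ 0 := by simpa [hS] using hα
      simp [hS, ha, this]
    · intro γ hγ
      have : γ ≠ 0 := by simpa [hS] using hγ
      simp [hS, ha, this]
    · intro α hα; field_simp
    · intro γ hγ; field_simp
    · intro α hα
      have hα0 : α ≠ 0 := by simpa [hS] using hα
      congr 1
      field_simp
  rw [Finset.sum_congr rfl (fun a ha => by rw [key1 a ha])]
  -- expand the m-th power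
  have key2 : ∀ a : F, (∑ γ ∈ S, ψ (a * (γ + γ⁻¹))) ^ m
      = ∑ v ∈ Fintype.piFinset (fun _ : Fin m => S), ψ (a * ∑ i, (v i + (v i)⁻¹)) := by
    intro a
    rw [← Fin.prod_const m, Finset.prod_univ_sum]
    refine Finset.sum_congr rfl fun v hv => ?_
    rw [Finset.mul_sum, addchar_map_sum]
  simp_rw [key2, Finset.mul_sum]
  rw [Finset.sum_comm]
  -- combine the characters
  have key3 : ∀ (a : F) (v : Fin m → F),
      ψ (-(a * β)) * ψ (∑ i, a * (v i + (v i)⁻¹)) = ψ (a * ((∑ i, (v i + (v i)⁻¹)) - β)) := by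
    intro a v
    rw [← ψ.map_add_eq_mul, ← Finset.mul_sum]; congr 1; ring
  simp_rw [key3]
  -- inner sum over a
  have inner : ∀ x : F, (∑ a ∈ S, ψ (a * x))
      = (if x = 0 then (Fintype.card F : ℂ) else 0) - 1 := by
    intro x
    have hsplit : (∑ a ∈ S, ψ (a * x)) = (∑ a : F, ψ (a * x)) - 1 := by
      rw [hS, Finset.filter_ne']
      rw [Finset.sum_erase_eq_sub (Finset.mem_univ 0)]
      simp [ψ.map_zero_eq_one]
    rw [hsplit]
    congr 1
    by_cases hx : x = 0
    · simp [hx, ψ.map_zero_eq_one, Finset.card_univ]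
    · have hprim := AddChar.IsPrimitive.of_ne_one hψ (a := x) hx
      have : (∑ a : F, ψ (a * x)) = ∑ a : F, (ψ.mulShift x) a := by
        simp [AddChar.mulShift_apply, mul_comm]
      rw [this, AddChar.sum_eq_zero_of_ne_one hprim, if_neg hx]
  have step : ∀ v : Fin m → F,
      (∑ a ∈ S, ψ (a * ((∑ i, (v i + (v i)⁻¹)) - β)))
      = (if (∑ i, (v i + (v i)⁻¹)) = β then (Fintype.card F : ℂ) else 0) - 1 := by
    intro v
    rw [inner]
    congr 2
    simp [sub_eq_zero]
  rw [Finset.sum_congr rfl (fun v _ => step v)]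
  rw [Finset.sum_sub_distrib]
  have hcardpi : (Fintype.piFinset (fun _ : Fin m => S)).card = (Fintype.card F - 1) ^ m := by
    simp [Fintype.card_piFinset, hS, Finset.filter_ne', Finset.card_erase_of_mem,
      Finset.card_univ]
  have hcast : ((Fintype.card F - 1 : ℕ) : ℂ) = (Fintype.card F : ℂ) - 1 := by
    have : 1 ≤ Fintype.card F := Fintype.card_pos
    push_cast [this]; ring
  -- count
  have hcount : (∑ v ∈ Fintype.piFinset (fun _ : Fin m => S),
      (if (∑ i, (v i + (v i)⁻¹)) = β then (Fintype.card F : ℂ) else 0))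
      = (Fintype.card F : ℂ) *
        (Nat.card {v : Fin m → F // (∀ i, v i ≠ 0) ∧ ∑ i, (v i + (v i)⁻¹) = β} : ℂ) := by
    rw [← Finset.sum_filter]
    simp only [Finset.sum_const, nsmul_eq_mul]
    rw [mul_comm, Nat.card_eq_fintype_card, Fintype.card_subtype]
    norm_cast
    congr 1
    congr 1
    ext v
    simp [hS, Fintype.mem_piFinset, and_comm]
  rw [hcount, Finset.sum_const, nsmul_eq_mul, hcardpi, mul_one, Nat.cast_pow, hcast]
end

section
/- Let q be a power of an odd prime, ε ∈ F_q* a nonsquare, and ψ a nontrivial additive character of F_q. Then Σ_{w ∈ SO⁻(2,q)} ψ(Tr w) = -K(ψ;1), where K(ψ;1) = Σ_{α ∈ F_q*} ψ(α + α⁻¹). -/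
open Finset

lemma key_count {F : Type*} [Field F] [Fintype F] [DecidableEq F] (hchar : ringChar F ≠ 2)
    (ε : F) (hε : ¬ IsSquare ε) (a : F) :
    (univ.filter fun b : F => a ^ 2 - ε * b ^ 2 = 1).card
      + (univ.filter fun x : F => x ≠ 0 ∧ x + x⁻¹ = a + a).card = 2 := by
  have hε0 : ε ≠ 0 := fun h => hε (h ▸ ⟨0, (mul_zero 0).symm⟩)
  have hset1 : (univ.filter fun b : F => a ^ 2 - ε * b ^ 2 = 1)
      = (univ.filter fun b : F => b ^ 2 = (a ^ 2 - 1) * ε⁻¹) := by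
    ext b
    simp only [mem_filter, mem_univ, true_and]
    constructor
    · intro h; field_simp; linear_combination -h
    · intro h; field_simp at h; linear_combination -h
  have hset2 : (univ.filter fun x : F => x ≠ 0 ∧ x + x⁻¹ = a + a)
      = (univ.filter fun y : F => y ^ 2 = a ^ 2 - 1).image (fun y => y + a) := by
    ext x
    simp only [mem_filter, mem_univ, true_and, mem_image]
    constructor
    · rintro ⟨hx0, hx⟩
      refine ⟨x - a, ?_, by ring⟩
      field_simp at hx
      linear_combination hx
    · rintro ⟨y, hy, rfl⟩
      have hx0 : y + a ≠ 0 := by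
        intro h
        have h1 : y = -a := by linear_combination h
        rw [h1] at hy
        have : (1 : F) = 0 := by linear_combination hy
        exact one_ne_zero this
      refine ⟨hx0, ?_⟩
      field_simp
      linear_combination hy
  have c1 : ((univ.filter fun b : F => a ^ 2 - ε * b ^ 2 = 1).card : ℤ)
      = quadraticChar F ((a ^ 2 - 1) * ε⁻¹) + 1 := by
    rw [hset1, ← quadraticChar_card_sqrts hchar ((a ^ 2 - 1) * ε⁻¹), Set.toFinset_setOf]
  have c2 : ((univ.filter fun x : F => x ≠ 0 ∧ x + x⁻¹ = a + a).card : ℤ)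
      = quadraticChar F (a ^ 2 - 1) + 1 := by
    rw [hset2, Finset.card_image_of_injective _ (add_left_injective a),
      ← quadraticChar_card_sqrts hchar (a ^ 2 - 1), Set.toFinset_setOf]
  have hεinv : quadraticChar F ε⁻¹ = -1 := by
    refine quadraticChar_neg_one_iff_not_isSquare.mpr ?_
    rintro ⟨c, hc⟩
    exact hε ⟨c⁻¹, by rw [← mul_inv, ← hc, inv_inv]⟩
  have hmul : quadraticChar F ((a ^ 2 - 1) * ε⁻¹)
      = - quadraticChar F (a ^ 2 - 1) := by
    rw [map_mul, hεinv, mul_neg_one]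
  have : (((univ.filter fun b : F => a ^ 2 - ε * b ^ 2 = 1).card
      + (univ.filter fun x : F => x ≠ 0 ∧ x + x⁻¹ = a + a).card : ℕ) : ℤ) = 2 := by
    push_cast [c1, c2, hmul]; ring
  exact_mod_cast this

theorem stmt7 {F : Type*} [Field F] [Fintype F] [DecidableEq F] (hchar : ringChar F ≠ 2)
    (ε : F) (hε : ¬ IsSquare ε) (ψ : AddChar F ℂ) (hψ : ψ ≠ 1)
    (S : Set (Matrix (Fin 2) (Fin 2) F))
    (hS : S = {M | ∃ a b : F, a ^ 2 - ε * b ^ 2 = 1 ∧ M = !![a, b * ε; b, a]}) :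
    ∑ w ∈ (Set.toFinite S).toFinset, ψ w.trace
      = -(∑ α ∈ Finset.univ.filter (fun α : F => α ≠ 0), ψ (α + α⁻¹)) := by
  have h2 : (2 : F) ≠ 0 := Ring.two_ne_zero hchar
  classical
  -- rewrite the matrix sum as a sum over pairs
  have hfin : (Set.toFinite S).toFinset
      = (univ.filter fun p : F × F => p.1 ^ 2 - ε * p.2 ^ 2 = 1).image
          (fun p => !![p.1, p.2 * ε; p.2, p.1]) := by
    ext M
    simp only [Set.Finite.mem_toFinset, hS, Set.mem_setOf_eq, mem_image, mem_filter,
      mem_univ, true_and, Prod.exists]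
    constructor
    · rintro ⟨a, b, h, rfl⟩; exact ⟨a, b, h, rfl⟩
    · rintro ⟨a, b, h, rfl⟩; exact ⟨a, b, h, rfl⟩
  have hinj : ∀ p ∈ (univ.filter fun p : F × F => p.1 ^ 2 - ε * p.2 ^ 2 = 1),
      ∀ q ∈ (univ.filter fun p : F × F => p.1 ^ 2 - ε * p.2 ^ 2 = 1),
      (fun p : F × F => !![p.1, p.2 * ε; p.2, p.1]) p
        = (fun p : F × F => !![p.1, p.2 * ε; p.2, p.1]) q → p = q := by
    rintro ⟨a, b⟩ _ ⟨c, d⟩ _ h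
    have h1 : a = c := by simpa using congrArg (fun M => M 0 0) h
    have h2 : b = d := by simpa using congrArg (fun M => M 1 0) h
    simp [h1, h2]
  rw [hfin, Finset.sum_image hinj]
  have htr : ∀ p : F × F, (!![p.1, p.2 * ε; p.2, p.1] : Matrix (Fin 2) (Fin 2) F).trace
      = p.1 + p.1 := by
    intro p; simp [Matrix.trace_fin_two]
  simp only [htr]
  -- each side as fiberwise sums
  have lhs_eq : ∑ p ∈ (univ.filter fun p : F × F => p.1 ^ 2 - ε * p.2 ^ 2 = 1), ψ (p.1 + p.1)
      = ∑ a : F, ((univ.filter fun b : F => a ^ 2 - ε * b ^ 2 = 1).card) • ψ (a + a) := by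
    rw [Finset.sum_filter, Fintype.sum_prod_type]
    refine Finset.sum_congr rfl fun a _ => ?_
    simp only
    rw [← Finset.sum_filter, Finset.sum_const]
  have rhs_eq : ∑ α ∈ univ.filter (fun α : F => α ≠ 0), ψ (α + α⁻¹)
      = ∑ a : F, ((univ.filter fun x : F => x ≠ 0 ∧ x + x⁻¹ = a + a).card) • ψ (a + a) := by
    have hbij : Function.Bijective (fun a : F => a + a) := by
      refine Finite.injective_iff_bijective.mp ?_
      intro x y hxy
      have : (2 : F) * x = 2 * y := by rw [two_mul, two_mul]; exact hxy
      exact mul_left_cancel₀ h2 this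
    calc ∑ α ∈ univ.filter (fun α : F => α ≠ 0), ψ (α + α⁻¹)
        = ∑ t : F, ∑ α ∈ (univ.filter (fun α : F => α ≠ 0)).filter
            (fun α => α + α⁻¹ = t), ψ (α + α⁻¹) := by
          rw [Finset.sum_fiberwise_of_maps_to (fun x _ => mem_univ _)]
      _ = ∑ t : F, ((univ.filter fun x : F => x ≠ 0 ∧ x + x⁻¹ = t).card) • ψ t := by
          refine Finset.sum_congr rfl fun t _ => ?_
          rw [Finset.filter_filter]
          rw [Finset.sum_congr rfl (fun x hx => by
            rw [(Finset.mem_filter.mp hx).2.2]), Finset.sum_const]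
      _ = ∑ a : F, ((univ.filter fun x : F => x ≠ 0 ∧ x + x⁻¹ = a + a).card) • ψ (a + a) :=
          (Fintype.sum_bijective _ hbij _ _ (fun a => rfl)).symm
  rw [lhs_eq, rhs_eq, eq_neg_iff_add_eq_zero, ← Finset.sum_add_distrib]
  have : ∀ a : F, ((univ.filter fun b : F => a ^ 2 - ε * b ^ 2 = 1).card) • ψ (a + a)
      + ((univ.filter fun x : F => x ≠ 0 ∧ x + x⁻¹ = a + a).card) • ψ (a + a)
      = 2 * ψ (a + a) := by
    intro a
    rw [← add_nsmul, key_count hchar ε hε a]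
    simp [nsmul_eq_mul]
  rw [Finset.sum_congr rfl fun a _ => this a, ← Finset.mul_sum]
  have hzero : ∑ a : F, ψ (a + a) = 0 := by
    have hbij : Function.Bijective (fun a : F => a + a) := by
      refine Finite.injective_iff_bijective.mp ?_
      intro x y hxy
      have : (2 : F) * x = 2 * y := by rw [two_mul, two_mul]; exact hxy
      exact mul_left_cancel₀ h2 this
    rw [Fintype.sum_bijective _ hbij _ (fun t => ψ t) (fun a => rfl)]
    exact AddChar.sum_eq_zero_iff_ne_zero.mpr hψ
  rw [hzero, mul_zero]
end

section
/- Let q be a power of an odd prime, ε ∈ F_q* a nonsquare, and ψ a nontrivial additive character of F_q. Define O⁻(2,q) = {i ∈ GL(2,q) : ᵗi δ_ε i = δ_ε} where δ_ε = [[1,0],[0,-ε]]. Then Σ_{w ∈ O⁻(2,q)} ψ(Tr w) = -K(ψ;1) + q + 1. -/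
open Finset

section Aux

variable {F : Type*} [Field F] [Fintype F] [DecidableEq F]

private lemma my_card_sqrts (hchar : ringChar F ≠ 2) (u : F) :
    (((univ.filter fun x : F => x ^ 2 = u).card : ℤ)) = quadraticChar F u + 1 := by
  have := quadraticChar_card_sqrts hchar u
  rwa [Set.toFinset_setOf] at this

private lemma my_shift_sum (hchar : ringChar F ≠ 2) :
    ∑ a : F, quadraticChar F (a ^ 2 - 1) = -1 := by
  have h2 : (2 : F) ≠ 0 := Ring.two_ne_zero hchar
  have step1 : ∑ a : F, quadraticChar F (a ^ 2 - 1)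
      = ∑ u : F, quadraticChar F u * quadraticChar F (u + 2) := by
    refine Fintype.sum_equiv (Equiv.subRight (1 : F)) _ _ fun a => ?_
    simp only [Equiv.subRight_apply]
    rw [← map_mul, show (a - 1) * (a - 1 + 2) = a ^ 2 - 1 by ring]
  rw [step1]
  have step2 : ∑ u : F, quadraticChar F u * quadraticChar F (u + 2)
      = ∑ u ∈ univ.filter (fun u : F => u ≠ 0), quadraticChar F u * quadraticChar F (u + 2) := by
    symm
    refine Finset.sum_subset (Finset.filter_subset _ _) fun u _ hu => ?_
    simp only [mem_filter, mem_univ, true_and, not_not] at hu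
    simp [hu]
  rw [step2]
  have step3 : ∀ u ∈ univ.filter (fun u : F => u ≠ 0),
      quadraticChar F u * quadraticChar F (u + 2) = quadraticChar F (1 + 2 * u⁻¹) := by
    intro u hu
    simp only [mem_filter, mem_univ, true_and] at hu
    have : u + 2 = u * (1 + 2 * u⁻¹) := by field_simp
    rw [this, map_mul, ← mul_assoc, ← pow_two, quadraticChar_sq_one hu, one_mul]
  rw [Finset.sum_congr rfl step3]
  have step4 : ∑ u ∈ univ.filter (fun u : F => u ≠ 0), quadraticChar F (1 + 2 * u⁻¹)
      = ∑ v ∈ univ.filter (fun v : F => v ≠ 1), quadraticChar F v := by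
    refine Finset.sum_nbij' (fun u => 1 + 2 * u⁻¹) (fun v => 2 * (v - 1)⁻¹) ?_ ?_ ?_ ?_ ?_
    · intro u hu
      simp only [mem_filter, mem_univ, true_and] at hu ⊢
      intro h
      have : (2 : F) * u⁻¹ = 0 := by linear_combination h
      rcases mul_eq_zero.mp this with h' | h'
      · exact h2 h'
      · exact hu (by simpa using inv_eq_zero.mp h')
    · intro v hv
      simp only [mem_filter, mem_univ, true_and] at hv ⊢
      have hv1 : v - 1 ≠ 0 := sub_ne_zero.mpr hv
      exact mul_ne_zero h2 (inv_ne_zero hv1)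
    · intro u hu
      simp only [mem_filter, mem_univ, true_and] at hu
      field_simp
      rw [add_sub_cancel_left, div_self h2]
    · intro v hv
      simp only [mem_filter, mem_univ, true_and] at hv
      have hv1 : v - 1 ≠ 0 := sub_ne_zero.mpr hv
      field_simp
      ring
    · intro u _; rfl
  rw [step4]
  have step5 : univ.filter (fun v : F => v ≠ 1) = Finset.univ.erase 1 := by
    ext v; simp [Finset.mem_erase]
  rw [step5, Finset.sum_erase_eq_sub (Finset.mem_univ _), quadraticChar_sum_zero hchar,
    MulChar.map_one]
  ring


private lemma my_chi_eps_inv (hchar : ringChar F ≠ 2) {ε : F} (hε : ¬ IsSquare ε) :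
    quadraticChar F ε⁻¹ = -1 := by
  have hε0 : ε ≠ 0 := fun h => hε (h ▸ ⟨0, by ring⟩)
  have h1 : quadraticChar F ε * quadraticChar F ε⁻¹ = 1 := by
    rw [← map_mul, mul_inv_cancel₀ hε0, MulChar.map_one]
  rw [quadraticChar_neg_one_iff_not_isSquare.mpr hε] at h1
  linarith

private lemma my_cardc (hchar : ringChar F ≠ 2) {ε : F} (hε : ¬ IsSquare ε) (a : F) :
    (((univ.filter fun c : F => a ^ 2 - ε * c ^ 2 = 1).card : ℤ))
      = 1 - quadraticChar F (a ^ 2 - 1) := by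
  have hε0 : ε ≠ 0 := fun h => hε (h ▸ ⟨0, by ring⟩)
  have hcond : (univ.filter fun c : F => a ^ 2 - ε * c ^ 2 = 1)
      = univ.filter fun c : F => c ^ 2 = (a ^ 2 - 1) * ε⁻¹ := by
    refine Finset.filter_congr fun c _ => ?_
    constructor
    · intro h; field_simp; linear_combination -h
    · intro h; field_simp at h; linear_combination -h
  rw [hcond, my_card_sqrts hchar, map_mul, my_chi_eps_inv hchar hε]
  ring

private lemma my_cardk (hchar : ringChar F ≠ 2) (t : F) :
    (((univ.filter fun α : F => α ≠ 0 ∧ α + α⁻¹ = t).card : ℤ))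
      = quadraticChar F (t ^ 2 - 4) + 1 := by
  have h2 : (2 : F) ≠ 0 := Ring.two_ne_zero hchar
  have hcond : (univ.filter fun α : F => α ≠ 0 ∧ α + α⁻¹ = t)
      = univ.filter fun α : F => α ^ 2 - t * α + 1 = 0 := by
    refine Finset.filter_congr fun α _ => ?_
    constructor
    · rintro ⟨hα, h⟩
      have h' : α * (α + α⁻¹) = α * t := by rw [h]
      field_simp at h'
      linear_combination h'
    · intro h
      have hα : α ≠ 0 := by rintro rfl; simp at h
      refine ⟨hα, ?_⟩
      field_simp
      linear_combination h
  have hbij : (univ.filter fun α : F => α ^ 2 - t * α + 1 = 0).card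
      = (univ.filter fun β : F => β ^ 2 = t ^ 2 - 4).card := by
    refine Finset.card_nbij' (fun α => 2 * α - t) (fun β => (β + t) / 2) ?_ ?_ ?_ ?_
    · intro α hα
      simp only [Finset.mem_coe, mem_filter, mem_univ, true_and] at hα ⊢
      linear_combination 4 * hα
    · intro β hβ
      simp only [Finset.mem_coe, mem_filter, mem_univ, true_and] at hβ ⊢
      have h4 : (4 : F) ≠ 0 := by
        intro h; apply h2; have : (2:F) * 2 = 0 := by linear_combination h
        rcases mul_eq_zero.mp this with h'|h' <;> exact h'
      field_simp
      linear_combination hβ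
    · intro α _; field_simp; ring
    · intro β _; field_simp; ring
  rw [hcond, hbij, my_card_sqrts hchar]

private lemma my_classify (hchar : ringChar F ≠ 2) {ε a b c d : F} (hε0 : ε ≠ 0)
    (h1 : a ^ 2 - ε * c ^ 2 = 1) (h2 : a * b - ε * (c * d) = 0)
    (h3 : b ^ 2 - ε * d ^ 2 = -ε) :
    (b = ε * c ∧ d = a) ∨ (b = -(ε * c) ∧ d = -a) := by
  have h2F : (2 : F) ≠ 0 := Ring.two_ne_zero hchar
  have hda : d ^ 2 = a ^ 2 := by
    have hh : ε * (d ^ 2 - a ^ 2) = 0 := by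
      linear_combination (a * b + ε * (c * d)) * h2 - a ^ 2 * h3 - ε * d ^ 2 * h1
    rcases mul_eq_zero.mp hh with h | h
    · exact absurd h hε0
    · linear_combination h
  have hbc : b ^ 2 = (ε * c) ^ 2 := by linear_combination h3 + ε * h1 + ε * hda
  have hd : d = a ∨ d = -a := by
    have : (d - a) * (d + a) = 0 := by linear_combination hda
    rcases mul_eq_zero.mp this with h | h
    · exact Or.inl (by linear_combination h)
    · exact Or.inr (by linear_combination h)
  have hb : b = ε * c ∨ b = -(ε * c) := by
    have : (b - ε * c) * (b + ε * c) = 0 := by linear_combination hbc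
    rcases mul_eq_zero.mp this with h | h
    · exact Or.inl (by linear_combination h)
    · exact Or.inr (by linear_combination h)
  rcases hd with hd | hd <;> rcases hb with hb | hb
  · exact Or.inl ⟨hb, hd⟩
  · -- d = a, b = -(ε c): then 2 ε c a = 0
    have hac : a = 0 ∨ c = 0 := by
      have : (2 * ε) * (a * c) = 0 := by
        subst hd hb; linear_combination -h2
      rcases mul_eq_zero.mp this with h | h
      · exact absurd h (mul_ne_zero h2F hε0)
      · exact mul_eq_zero.mp h
    rcases hac with h | h
    · subst h; exact Or.inr ⟨hb, by rw [hd]; ring⟩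
    · subst h; exact Or.inl ⟨by rw [hb]; ring, hd⟩
  · -- d = -a, b = ε c
    have hac : a = 0 ∨ c = 0 := by
      have : (2 * ε) * (a * c) = 0 := by
        subst hd hb; linear_combination h2
      rcases mul_eq_zero.mp this with h | h
      · exact absurd h (mul_ne_zero h2F hε0)
      · exact mul_eq_zero.mp h
    rcases hac with h | h
    · subst h; exact Or.inl ⟨hb, by rw [hd]; ring⟩
    · subst h; exact Or.inr ⟨by rw [hb]; ring, hd⟩
  · exact Or.inr ⟨hb, hd⟩


private lemma my_sum_fst (hchar : ringChar F ≠ 2) {ε : F} (hε : ¬ IsSquare ε) (f : F → ℂ) :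
    ∑ p ∈ univ.filter (fun p : F × F => p.1 ^ 2 - ε * p.2 ^ 2 = 1), f p.1
      = ∑ a : F, ((1 - quadraticChar F (a ^ 2 - 1) : ℤ) : ℂ) * f a := by
  set s := univ.filter (fun p : F × F => p.1 ^ 2 - ε * p.2 ^ 2 = 1) with hs
  have h0 := Finset.sum_fiberwise_eq_sum_filter s univ Prod.fst (fun p => f p.1)
  simp only [Finset.mem_univ, Finset.filter_true] at h0
  rw [← h0]
  refine Finset.sum_congr rfl fun a _ => ?_
  have hterm : ∑ p ∈ s.filter (fun p => p.1 = a), f p.1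
      = (s.filter (fun p => p.1 = a)).card • f a := by
    rw [← Finset.sum_const]
    refine Finset.sum_congr rfl fun p hp => ?_
    simp only [Finset.mem_filter] at hp
    rw [hp.2]
  rw [hterm]
  have hcard : (s.filter (fun p => p.1 = a)).card
      = (univ.filter fun c : F => a ^ 2 - ε * c ^ 2 = 1).card := by
    refine Finset.card_nbij' (fun p => p.2) (fun c => (a, c)) ?_ ?_ ?_ ?_
    · intro p hp
      simp only [hs, Finset.mem_coe, Finset.mem_filter, Finset.mem_univ, true_and] at hp ⊢
      rw [← hp.2]; exact hp.1
    · intro c hc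
      simp only [hs, Finset.mem_coe, Finset.mem_filter, Finset.mem_univ, true_and] at hc ⊢
      exact ⟨hc, trivial⟩
    · intro p hp
      simp only [hs, Finset.mem_coe, Finset.mem_filter] at hp
      exact Prod.ext hp.2.symm rfl
    · intro c _; rfl
  rw [hcard, nsmul_eq_mul, ← my_cardc hchar hε a]
  push_cast
  ring

private lemma my_K (hchar : ringChar F ≠ 2) (ψ : AddChar F ℂ) :
    ∑ α ∈ univ.filter (fun α : F => α ≠ 0), ψ (α + α⁻¹)
      = ∑ t : F, ((quadraticChar F (t ^ 2 - 4) + 1 : ℤ) : ℂ) * ψ t := by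
  have h0 := Finset.sum_fiberwise_eq_sum_filter (univ.filter (fun α : F => α ≠ 0)) univ
    (fun α : F => α + α⁻¹) (fun α : F => ψ (α + α⁻¹))
  simp only [Finset.mem_univ, Finset.filter_true] at h0
  rw [← h0]
  refine Finset.sum_congr rfl fun t _ => ?_
  have hterm : ∑ α ∈ (univ.filter (fun α : F => α ≠ 0)).filter (fun α => α + α⁻¹ = t), ψ (α + α⁻¹)
      = ((univ.filter (fun α : F => α ≠ 0)).filter (fun α => α + α⁻¹ = t)).card • ψ t := by
    rw [← Finset.sum_const]
    refine Finset.sum_congr rfl fun α hα => ?_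
    simp only [Finset.mem_filter] at hα
    rw [hα.2]
  rw [hterm, Finset.filter_filter, nsmul_eq_mul, ← my_cardk hchar t]
  push_cast
  ring

end Aux

theorem stmt9 {F : Type*} [Field F] [Fintype F] [DecidableEq F] (hchar : ringChar F ≠ 2)
    (ε : F) (hε : ¬ IsSquare ε) (ψ : AddChar F ℂ) (hψ : ψ ≠ 1)
    (O : Set (Matrix (Fin 2) (Fin 2) F))
    (hO : O = {M | IsUnit M ∧ M.transpose * !![1, 0; 0, -ε] * M = !![1, 0; 0, -ε]}) :
    ∑ w ∈ (Set.toFinite O).toFinset, ψ w.trace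
      = -(∑ α ∈ Finset.univ.filter (fun α : F => α ≠ 0), ψ (α + α⁻¹))
        + (Fintype.card F : ℂ) + 1 := by
  classical
  have hε0 : ε ≠ 0 := fun h => hε (h ▸ ⟨0, by ring⟩)
  have h2 : (2 : F) ≠ 0 := Ring.two_ne_zero hchar
  set A : Finset (F × F) := univ.filter (fun p : F × F => p.1 ^ 2 - ε * p.2 ^ 2 = 1) with hA
  set f1 : F × F → Matrix (Fin 2) (Fin 2) F := fun p => !![p.1, ε * p.2; p.2, p.1] with hf1
  set f2 : F × F → Matrix (Fin 2) (Fin 2) F := fun p => !![p.1, -(ε * p.2); p.2, -p.1] with hf2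
  -- the two coset pieces
  have hmem1 : ∀ p ∈ A, IsUnit (f1 p) ∧
      (f1 p).transpose * !![1, 0; 0, -ε] * (f1 p) = !![1, 0; 0, -ε] := by
    rintro ⟨a, c⟩ hp
    simp only [hA, Finset.mem_filter, Finset.mem_univ, true_and] at hp
    constructor
    · rw [hf1, Matrix.isUnit_iff_isUnit_det, Matrix.det_fin_two_of, isUnit_iff_ne_zero]
      intro hd
      rw [show a * a - ε * c * c = a ^ 2 - ε * c ^ 2 by ring, hp] at hd
      exact one_ne_zero hd
    · ext i j
      fin_cases i <;> fin_cases j <;>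
        simp [hf1, Matrix.mul_apply, Matrix.transpose_apply, Fin.sum_univ_two,
          Matrix.vecHead, Matrix.vecTail] <;>
        first | ring1 | linear_combination hp | linear_combination -hp | linear_combination ε * hp | linear_combination -ε * hp | linear_combination (1 - ε) * hp | linear_combination (ε - 1) * hp | linear_combination (1 + ε) * hp | linear_combination (-1 - ε) * hp
  have hmem2 : ∀ p ∈ A, IsUnit (f2 p) ∧
      (f2 p).transpose * !![1, 0; 0, -ε] * (f2 p) = !![1, 0; 0, -ε] := by
    rintro ⟨a, c⟩ hp
    simp only [hA, Finset.mem_filter, Finset.mem_univ, true_and] at hp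
    constructor
    · rw [hf2, Matrix.isUnit_iff_isUnit_det, Matrix.det_fin_two_of, isUnit_iff_ne_zero]
      intro hd
      rw [show a * -a - -(ε * c) * c = -(a ^ 2 - ε * c ^ 2) by ring, hp] at hd
      simp at hd
    · ext i j
      fin_cases i <;> fin_cases j <;>
        simp [hf2, Matrix.mul_apply, Matrix.transpose_apply, Fin.sum_univ_two,
          Matrix.vecHead, Matrix.vecTail] <;>
        first | ring1 | linear_combination hp | linear_combination -hp | linear_combination ε * hp | linear_combination -ε * hp | linear_combination (1 - ε) * hp | linear_combination (ε - 1) * hp | linear_combination (1 + ε) * hp | linear_combination (-1 - ε) * hp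
  have hset : (Set.toFinite O).toFinset = A.image f1 ∪ A.image f2 := by
    ext M
    rw [Set.Finite.mem_toFinset, hO, Finset.mem_union]
    constructor
    · rintro ⟨hu, he⟩
      have e00 := congrFun (congrFun he 0) 0
      have e01 := congrFun (congrFun he 0) 1
      have e11 := congrFun (congrFun he 1) 1
      simp [Matrix.mul_apply, Matrix.transpose_apply, Fin.sum_univ_two] at e00 e01 e11
      have k1 : (M 0 0) ^ 2 - ε * (M 1 0) ^ 2 = 1 := by linear_combination e00
      have k2 : (M 0 0) * (M 0 1) - ε * ((M 1 0) * (M 1 1)) = 0 := by linear_combination e01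
      have k3 : (M 0 1) ^ 2 - ε * (M 1 1) ^ 2 = -ε := by linear_combination e11
      rcases my_classify hchar hε0 k1 k2 k3 with ⟨hb, hd⟩ | ⟨hb, hd⟩
      · left
        refine Finset.mem_image.mpr ⟨(M 0 0, M 1 0), ?_, ?_⟩
        · simp only [hA, Finset.mem_filter, Finset.mem_univ, true_and]; exact k1
        · simp only [hf1]
          conv_rhs => rw [Matrix.eta_fin_two M]
          rw [hb, hd]
      · right
        refine Finset.mem_image.mpr ⟨(M 0 0, M 1 0), ?_, ?_⟩
        · simp only [hA, Finset.mem_filter, Finset.mem_univ, true_and]; exact k1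
        · simp only [hf2]
          conv_rhs => rw [Matrix.eta_fin_two M]
          rw [hb, hd]
    · rintro (hM | hM) <;> obtain ⟨p, hp, rfl⟩ := Finset.mem_image.mp hM
      · exact hmem1 p hp
      · exact hmem2 p hp
  have hinj1 : Set.InjOn f1 A := by
    intro p _ q _ h
    have h1 := congrFun (congrFun h 0) 0
    have h2 := congrFun (congrFun h 1) 0
    simp [hf1] at h1 h2
    exact Prod.ext h1 h2
  have hinj2 : Set.InjOn f2 A := by
    intro p _ q _ h
    have h1 := congrFun (congrFun h 0) 0
    have h2 := congrFun (congrFun h 1) 0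
    simp [hf2] at h1 h2
    exact Prod.ext h1 h2
  have hdisj : Disjoint (A.image f1) (A.image f2) := by
    rw [Finset.disjoint_left]
    rintro M hM1 hM2
    obtain ⟨p, hp, rfl⟩ := Finset.mem_image.mp hM1
    obtain ⟨q, hq, hqe⟩ := Finset.mem_image.mp hM2
    have e1 := congrFun (congrFun hqe 0) 0
    have e2 := congrFun (congrFun hqe 1) 0
    have e3 := congrFun (congrFun hqe 1) 1
    simp [hf1, hf2] at e1 e2 e3
    -- e1 : q.1 = p.1, e2 : q.2 = p.2, e3 : -q.1 = p.1
    have hp1 : p.1 = 0 := by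
      have : (2 : F) * p.1 = 0 := by linear_combination -e1 - e3
      rcases mul_eq_zero.mp this with h | h
      · exact absurd h h2
      · exact h
    simp only [hA, Finset.mem_filter, Finset.mem_univ, true_and] at hp
    rw [hp1] at hp
    have hc : ε * p.2 ^ 2 = -1 := by linear_combination -hp
    have hc2 : p.2 ≠ 0 := by
      rintro h; rw [h] at hc; simp at hc
    have e4 := congrFun (congrFun hqe 0) 1
    simp [hf1, hf2] at e4
    -- e4 : -(ε * q.2) = ε * p.2
    rw [e2] at e4
    have : (2 : F) * (ε * p.2) = 0 := by linear_combination -e4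
    rcases mul_eq_zero.mp this with h | h
    · exact h2 h
    · rcases mul_eq_zero.mp h with h' | h'
      · exact hε0 h'
      · exact hc2 h'
  rw [hset, Finset.sum_union hdisj, Finset.sum_image (fun p hp q hq h => hinj1 hp hq h),
    Finset.sum_image (fun p hp q hq h => hinj2 hp hq h)]
  have ht1 : ∀ p ∈ A, ψ ((f1 p).trace) = ψ (p.1 + p.1) := by
    intro p _; rw [hf1]; simp [Matrix.trace_fin_two_of]
  have ht2 : ∀ p ∈ A, ψ ((f2 p).trace) = 1 := by
    intro p _; rw [hf2]; simp [Matrix.trace_fin_two_of]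
  rw [Finset.sum_congr rfl ht1, Finset.sum_congr rfl ht2]
  rw [my_sum_fst hchar hε (fun a => ψ (a + a)), my_sum_fst hchar hε (fun _ => (1 : ℂ)),
    my_K hchar ψ]
  -- now everything is sums over F
  have hbij2 : Function.Bijective (fun a : F => 2 * a) :=
    (Equiv.mulLeft₀ (2 : F) h2).bijective
  have hsum0 : ∑ t : F, ψ t = 0 :=
    AddChar.sum_eq_zero_iff_ne_zero.mpr (by exact hψ)
  have hsumaa : ∑ a : F, ψ (a + a) = 0 := by
    rw [← hsum0]
    exact Fintype.sum_bijective _ hbij2 _ _ fun a => by rw [two_mul]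
  have hchi4 : ∀ a : F, quadraticChar F ((2 * a) ^ 2 - 4) = quadraticChar F (a ^ 2 - 1) := by
    intro a
    rw [show (2 * a : F) ^ 2 - 4 = 2 ^ 2 * (a ^ 2 - 1) by ring, map_mul,
      quadraticChar_sq_one' h2, one_mul]
  have hE3 : ∑ t : F, ((quadraticChar F (t ^ 2 - 4) : ℤ) : ℂ) * ψ t
      = ∑ a : F, ((quadraticChar F (a ^ 2 - 1) : ℤ) : ℂ) * ψ (a + a) := by
    refine (Fintype.sum_bijective _ hbij2 _ _ fun a => ?_).symm
    rw [hchi4 a, two_mul]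
  have hshift : ∑ a : F, ((quadraticChar F (a ^ 2 - 1) : ℤ) : ℂ) = -1 := by
    have := my_shift_sum (F := F) hchar
    have hc : ((∑ a : F, quadraticChar F (a ^ 2 - 1) : ℤ) : ℂ) = ((-1 : ℤ) : ℂ) := by
      exact_mod_cast congrArg (fun n : ℤ => (n : ℂ)) this
    push_cast at hc
    simpa using hc
  have hcardF : ∑ _a : F, (1 : ℂ) = (Fintype.card F : ℂ) := by
    simp [Finset.card_univ]
  -- expand both sides
  simp only [push_cast, Int.cast_sub, Int.cast_add, Int.cast_one, sub_mul, add_mul, one_mul]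
  rw [Finset.sum_sub_distrib, Finset.sum_sub_distrib, Finset.sum_add_distrib]
  simp only [mul_one]
  rw [hsumaa, hE3, hsum0, hshift, hcardF]
  ring
end

section
/- For integers t ≥ 2 and a ∈ F_q*, with ψ a nontrivial additive character of F_q, the Kloosterman sum for GL(t,q), defined by K_{GL(t,q)}(ψ;a) = Σ_{w ∈ GL(t,q)} ψ(Tr w + a·Tr w⁻¹), satisfies the case t = 2 identity: K_{GL(2,q)}(ψ;a) = q·K(ψ;a)² + q²(q-1), where K(ψ;a) = K_{GL(1,q)}(ψ;a) = Σ_{α∈F_q*} ψ(α + aα⁻¹). -/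
open Finset Matrix

theorem stmt11 {F : Type*} [Field F] [Fintype F] [DecidableEq F]
    (ψ : AddChar F ℂ) (hψ : ψ ≠ 1) (a : F) (ha : a ≠ 0) :
    ∑ w : GL (Fin 2) F,
        ψ ((w : Matrix (Fin 2) (Fin 2) F).trace
          + a * ((↑(w⁻¹) : Matrix (Fin 2) (Fin 2) F)).trace)
      = (Fintype.card F : ℂ) *
          (∑ α ∈ Finset.univ.filter (fun α : F => α ≠ 0), ψ (α + a * α⁻¹)) ^ 2
        + (Fintype.card F : ℂ) ^ 2 * ((Fintype.card F : ℂ) - 1) := by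
  classical
  have hprim : ψ.IsPrimitive := AddChar.IsPrimitive.of_ne_one hψ
  set q : ℂ := (Fintype.card F : ℂ) with hq
  have hsum : ∀ c : F, (∑ x : F, ψ (x * c)) = if c = 0 then q else 0 := by
    intro c; rw [AddChar.sum_mulShift c hprim]; split_ifs <;> simp [hq]
  -- trace of inverse
  have trinv : ∀ m : Matrix (Fin 2) (Fin 2) F, (m⁻¹).trace = m.det⁻¹ * m.trace := by
    intro m
    rw [Matrix.inv_def, Matrix.trace_smul, Matrix.adjugate_fin_two, Matrix.trace_fin_two_of,
      Ring.inverse_eq_inv', smul_eq_mul, Matrix.trace_fin_two, add_comm (m 1 1)]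
  set f : F → ℂ := fun α => if α = 0 then 0 else ψ (α + a * α⁻¹) with hf
  set P : F → F → F → F → ℂ := fun γ α δ β =>
    if α * δ - β * γ = 0 then 0 else ψ ((α + δ) * (1 + a * (α * δ - β * γ)⁻¹)) with hP
  -- Step 1 : GL sum = matrix sum
  have h1 : (∑ w : GL (Fin 2) F,
        ψ ((w : Matrix (Fin 2) (Fin 2) F).trace
          + a * ((↑(w⁻¹) : Matrix (Fin 2) (Fin 2) F)).trace))
      = ∑ m ∈ univ.filter (fun m : Matrix (Fin 2) (Fin 2) F => m.det ≠ 0),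
          ψ (m.trace * (1 + a * m.det⁻¹)) := by
    refine Finset.sum_bij (fun w _ => (w : Matrix (Fin 2) (Fin 2) F)) ?_ ?_ ?_ ?_
    · intro w _
      simp only [mem_filter, mem_univ, true_and]
      exact ((Matrix.isUnit_iff_isUnit_det _).mp w.isUnit).ne_zero
    · intro w₁ _ w₂ _ h; exact Units.ext h
    · intro m hm
      simp only [mem_filter, mem_univ, true_and] at hm
      exact ⟨Matrix.GeneralLinearGroup.mkOfDetNeZero m hm, mem_univ _, rfl⟩
    · intro w _
      rw [Matrix.coe_units_inv, trinv]
      congr 1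
      ring
  -- Step 2 : matrix sum = quadruple sum
  have h2 : (∑ m ∈ univ.filter (fun m : Matrix (Fin 2) (Fin 2) F => m.det ≠ 0),
          ψ (m.trace * (1 + a * m.det⁻¹)))
      = ∑ γ : F, ∑ α : F, ∑ δ : F, ∑ β : F, P γ α δ β := by
    rw [Finset.sum_filter]
    let e : (F × F × F × F) ≃ Matrix (Fin 2) (Fin 2) F :=
    { toFun := fun p => !![p.2.1, p.2.2.2; p.1, p.2.2.1],
      invFun := fun m => (m 1 0, m 0 0, m 1 1, m 0 1),
      left_inv := by intro p; simp,
      right_inv := by intro m; exact (Matrix.eta_fin_two m).symm }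
    rw [← Equiv.sum_comp e (fun m => if m.det ≠ 0 then ψ (m.trace * (1 + a * m.det⁻¹)) else 0)]
    rw [Fintype.sum_prod_type]
    refine sum_congr rfl fun γ _ => ?_
    rw [Fintype.sum_prod_type]
    refine sum_congr rfl fun α _ => ?_
    rw [Fintype.sum_prod_type]
    refine sum_congr rfl fun δ _ => ?_
    refine sum_congr rfl fun β _ => ?_
    simp only [e, hP, Equiv.coe_fn_mk, Matrix.det_fin_two_of, Matrix.trace_fin_two_of, ite_not]
  -- the γ = 0 term
  have h0 : (∑ α : F, ∑ δ : F, ∑ β : F, P 0 α δ β) = q * (∑ α : F, f α) ^ 2 := by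
    have hX : ∀ α δ : F, P 0 α δ 0 = f α * f δ := by
      intro α δ
      rcases eq_or_ne α 0 with h | h
      · simp [hP, hf, h]
      rcases eq_or_ne δ 0 with h' | h'
      · simp [hP, hf, h']
      simp only [hP, hf, mul_zero, sub_zero, if_neg (mul_ne_zero h h'), if_neg h, if_neg h']
      rw [← AddChar.map_add_eq_mul]
      congr 1
      field_simp
      ring
    have hconst : ∀ α δ β : F, P 0 α δ β = P 0 α δ 0 := by
      intro α δ β; simp only [hP, mul_zero, sub_zero]
    calc (∑ α : F, ∑ δ : F, ∑ β : F, P 0 α δ β)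
        = ∑ α : F, ∑ δ : F, q * (f α * f δ) := by
          refine sum_congr rfl fun α _ => sum_congr rfl fun δ _ => ?_
          rw [Finset.sum_congr rfl fun β _ => (hconst α δ β).trans (hX α δ)]
          rw [Finset.sum_const, card_univ, nsmul_eq_mul, hq]
      _ = q * ((∑ α : F, f α) * (∑ δ : F, f δ)) := by
          rw [Finset.sum_mul_sum, Finset.mul_sum]
          exact sum_congr rfl fun α _ => (Finset.mul_sum _ _ _).symm
      _ = q * (∑ α : F, f α) ^ 2 := by ring
  -- the γ ≠ 0 terms
  have hne : ∀ γ ∈ univ.erase (0 : F), (∑ α : F, ∑ δ : F, ∑ β : F, P γ α δ β) = q ^ 2 := by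
    intro γ hγ
    have hγ0 : γ ≠ 0 := (Finset.mem_erase.mp hγ).1
    set Q : F → F → F → ℂ := fun α δ e =>
      if e = 0 then 0 else ψ ((α + δ) * (1 + a * e⁻¹)) with hQ
    have stepA : ∀ α δ : F, (∑ β : F, P γ α δ β) = ∑ e : F, Q α δ e := by
      intro α δ
      have := Equiv.sum_comp ((Equiv.mulRight₀ γ hγ0).trans (Equiv.subLeft (α * δ))) (Q α δ)
      rw [← this]
      refine sum_congr rfl fun β _ => ?_
      simp [hQ, hP, Equiv.subLeft, Equiv.mulRight₀]
    have stepC : ∀ e : F, (∑ α : F, ∑ δ : F, Q α δ e) = if e = -a then q ^ 2 else 0 := by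
      intro e
      rcases eq_or_ne e 0 with h | h
      · simp [hQ, h, ha, zero_eq_neg]
      have hc : (1 + a * e⁻¹ = 0) ↔ e = -a := by
        have h1 : 1 + a * e⁻¹ = (e + a) * e⁻¹ := by field_simp
        rw [h1, mul_eq_zero, or_iff_left (inv_ne_zero h), add_eq_zero_iff_eq_neg]
      calc (∑ α : F, ∑ δ : F, Q α δ e)
          = ∑ α : F, ∑ δ : F, ψ (α * (1 + a * e⁻¹)) * ψ (δ * (1 + a * e⁻¹)) := by
            refine sum_congr rfl fun α _ => sum_congr rfl fun δ _ => ?_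
            rw [hQ]; simp only [if_neg h]
            rw [← AddChar.map_add_eq_mul]; congr 1; ring
        _ = (∑ x : F, ψ (x * (1 + a * e⁻¹))) * (∑ x : F, ψ (x * (1 + a * e⁻¹))) := by
            rw [Finset.sum_mul_sum]
        _ = if e = -a then q ^ 2 else 0 := by
            rw [hsum]
            split_ifs with h1 h2 h2
            · ring
            · exact absurd (hc.mp h1) h2
            · exact absurd (hc.mpr h2) h1
            · ring
    calc (∑ α : F, ∑ δ : F, ∑ β : F, P γ α δ β)
        = ∑ α : F, ∑ δ : F, ∑ e : F, Q α δ e :=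
          sum_congr rfl fun α _ => sum_congr rfl fun δ _ => stepA α δ
      _ = ∑ α : F, ∑ e : F, ∑ δ : F, Q α δ e :=
          sum_congr rfl fun α _ => Finset.sum_comm
      _ = ∑ e : F, ∑ α : F, ∑ δ : F, Q α δ e := Finset.sum_comm
      _ = ∑ e : F, if e = -a then q ^ 2 else 0 := sum_congr rfl fun e _ => stepC e
      _ = q ^ 2 := by simp
  -- K as a full sum
  have hK : (∑ α ∈ Finset.univ.filter (fun α : F => α ≠ 0), ψ (α + a * α⁻¹))
      = ∑ α : F, f α := by
    rw [Finset.sum_filter]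
    exact sum_congr rfl fun α _ => by simp [hf, ite_not]
  -- assemble
  rw [h1, h2, ← Finset.add_sum_erase univ _ (mem_univ (0 : F)), h0,
    Finset.sum_congr rfl hne, Finset.sum_const, hK]
  rw [Finset.card_erase_of_mem (mem_univ _), card_univ, nsmul_eq_mul]
  have hcard : ((Fintype.card F - 1 : ℕ) : ℂ) = q - 1 := by
    rw [Nat.cast_sub Fintype.card_pos, Nat.cast_one, hq]
  rw [hcard]
  ring
end
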